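/- arXiv:1207.3703 — 2 statements merged into one kernel-verified Lean document; each statement's English description precedes it below -/
import Mathlib

section
/- Let N ≥ 1, Ω ⊂ ℝ^N a smoothly bounded domain, and f, g nondecreasing C¹ functions. Let (u, v) ∈ C²(Ω̄)² be a stable solution of the system −Δu = g(v), −Δv = f(u) in Ω with u = v = 0 on ∂Ω. Then for every φ ∈ C¹_c(Ω): ∫_Ω √(f′(u) g′(v)) φ² dx ≤ ∫_Ω |∇φ|² dx. -/
open MeasureTheory Real
open scoped RealInnerProductSpace

/-- The Laplacian of `u : ℝ^N → ℝ`, computed as the sum of second derivatives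
along the standard basis directions. -/
noncomputable def lap {N : ℕ} (u : EuclideanSpace ℝ (Fin N) → ℝ)
    (x : EuclideanSpace ℝ (Fin N)) : ℝ :=
  ∑ i : Fin N,
    fderiv ℝ (fun y => fderiv ℝ u y (EuclideanSpace.single i 1)) x (EuclideanSpace.single i 1)

/-- A (smoothly bounded) domain: a nonempty bounded open connected subset of `ℝ^N`. -/
def IsBoundedDomain {N : ℕ} (Ω : Set (EuclideanSpace ℝ (Fin N))) : Prop :=
  IsOpen Ω ∧ IsConnected Ω ∧ Bornology.IsBounded Ω

/-- `(u, v)` is a classical solution of the Gelfand system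
`-Δu = μ e^v`, `-Δv = λ e^u` in `Ω`, `u = v = 0` on `∂Ω`. -/
def IsGelfandSolution {N : ℕ} (Ω : Set (EuclideanSpace ℝ (Fin N))) (lam mu : ℝ)
    (u v : EuclideanSpace ℝ (Fin N) → ℝ) : Prop :=
  ContDiffOn ℝ 2 u (closure Ω) ∧ ContDiffOn ℝ 2 v (closure Ω) ∧
  (∀ x ∈ Ω, -lap u x = mu * exp (v x)) ∧
  (∀ x ∈ Ω, -lap v x = lam * exp (u x)) ∧
  (∀ x ∈ frontier Ω, u x = 0) ∧ (∀ x ∈ frontier Ω, v x = 0)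

/-- `(u, v)` is a stable classical solution of the Gelfand system: there exist `λ₁ ≥ 0` and
positive eigenfunctions `φ₁, ψ₁ ∈ C²(Ω̄)` of the linearized system, vanishing on `∂Ω`. -/
def IsStableGelfandSolution {N : ℕ} (Ω : Set (EuclideanSpace ℝ (Fin N))) (lam mu : ℝ)
    (u v : EuclideanSpace ℝ (Fin N) → ℝ) : Prop :=
  IsGelfandSolution Ω lam mu u v ∧
  ∃ (lam1 : ℝ) (φ₁ ψ₁ : EuclideanSpace ℝ (Fin N) → ℝ),
    0 ≤ lam1 ∧
    ContDiffOn ℝ 2 φ₁ (closure Ω) ∧ ContDiffOn ℝ 2 ψ₁ (closure Ω) ∧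
    (∀ x ∈ Ω, 0 < φ₁ x) ∧ (∀ x ∈ Ω, 0 < ψ₁ x) ∧
    (∀ x ∈ Ω, -lap φ₁ x - mu * exp (v x) * ψ₁ x = lam1 * φ₁ x) ∧
    (∀ x ∈ Ω, -lap ψ₁ x - lam * exp (u x) * φ₁ x = lam1 * ψ₁ x) ∧
    (∀ x ∈ frontier Ω, φ₁ x = 0) ∧ (∀ x ∈ frontier Ω, ψ₁ x = 0)

/-- `(u, v)` is a classical solution of the system
`-Δu = g(v)`, `-Δv = f(u)` in `Ω`, `u = v = 0` on `∂Ω`. -/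
def IsSystemSolution {N : ℕ} (Ω : Set (EuclideanSpace ℝ (Fin N))) (f g : ℝ → ℝ)
    (u v : EuclideanSpace ℝ (Fin N) → ℝ) : Prop :=
  ContDiffOn ℝ 2 u (closure Ω) ∧ ContDiffOn ℝ 2 v (closure Ω) ∧
  (∀ x ∈ Ω, -lap u x = g (v x)) ∧
  (∀ x ∈ Ω, -lap v x = f (u x)) ∧
  (∀ x ∈ frontier Ω, u x = 0) ∧ (∀ x ∈ frontier Ω, v x = 0)

/-- Stability of a classical solution of the system `-Δu = g(v)`, `-Δv = f(u)`:
there exist `λ₁ ≥ 0` and positive `φ₁, ψ₁ ∈ C²(Ω̄)` solving the linearized system. -/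
def IsStableSystemSolution {N : ℕ} (Ω : Set (EuclideanSpace ℝ (Fin N))) (f g : ℝ → ℝ)
    (u v : EuclideanSpace ℝ (Fin N) → ℝ) : Prop :=
  IsSystemSolution Ω f g u v ∧
  ∃ (lam1 : ℝ) (φ₁ ψ₁ : EuclideanSpace ℝ (Fin N) → ℝ),
    0 ≤ lam1 ∧
    ContDiffOn ℝ 2 φ₁ (closure Ω) ∧ ContDiffOn ℝ 2 ψ₁ (closure Ω) ∧
    (∀ x ∈ Ω, 0 < φ₁ x) ∧ (∀ x ∈ Ω, 0 < ψ₁ x) ∧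
    (∀ x ∈ Ω, -lap φ₁ x - deriv g (v x) * ψ₁ x = lam1 * φ₁ x) ∧
    (∀ x ∈ Ω, -lap ψ₁ x - deriv f (u x) * φ₁ x = lam1 * ψ₁ x) ∧
    (∀ x ∈ frontier Ω, φ₁ x = 0) ∧ (∀ x ∈ frontier Ω, ψ₁ x = 0)

section AuxStability

open Set Filter Topology

-- AM-GM for sqrt
private lemma sqrt_mul_le_half' {a b : ℝ} (ha : 0 ≤ a) (hb : 0 ≤ b) :
    Real.sqrt (a * b) ≤ (a + b) / 2 := by
  rw [Real.sqrt_mul ha]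
  nlinarith [sq_nonneg (Real.sqrt a - Real.sqrt b), Real.sq_sqrt ha, Real.sq_sqrt hb,
    Real.sqrt_nonneg a, Real.sqrt_nonneg b]

-- monotone => deriv nonneg
private lemma monotone_deriv_nonneg' {f : ℝ → ℝ} (hf : Monotone f) {x : ℝ}
    (hd : DifferentiableAt ℝ f x) : 0 ≤ deriv f x := by
  have h := hd.hasDerivAt
  rw [hasDerivAt_iff_tendsto_slope] at h
  have h2 : Tendsto (slope f x) (nhdsWithin x (Set.Ioi x)) (nhds (deriv f x)) :=
    h.mono_left (nhdsWithin_mono x (fun y hy => ne_of_gt hy))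
  refine ge_of_tendsto h2 ?_
  filter_upwards [self_mem_nhdsWithin] with y hy
  rw [slope_def_field]
  exact div_nonneg (sub_nonneg.2 (hf (le_of_lt hy))) (sub_nonneg.2 (le_of_lt hy))

private lemma grad_sq_eq' {N : ℕ} (φ : EuclideanSpace ℝ (Fin N) → ℝ)
    (x : EuclideanSpace ℝ (Fin N)) :
    ‖gradient φ x‖ ^ 2 = ∑ i : Fin N, (fderiv ℝ φ x (EuclideanSpace.single i 1)) ^ 2 := by
  have hcoord : ∀ i : Fin N, (gradient φ x) i = fderiv ℝ φ x (EuclideanSpace.single i 1) := by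
    intro i
    have h1 : (inner ℝ (gradient φ x) (EuclideanSpace.single i (1:ℝ)) : ℝ)
        = fderiv ℝ φ x (EuclideanSpace.single i 1) :=
      InnerProductSpace.toDual_symm_apply
    rw [EuclideanSpace.inner_single_right] at h1
    simpa using h1
  rw [EuclideanSpace.norm_eq, Real.sq_sqrt (by positivity)]
  exact Finset.sum_congr rfl fun i _ => by rw [hcoord i]; simp [sq_abs]

private lemma gradient_eq_zero_of_nmem' {N : ℕ} {φ : EuclideanSpace ℝ (Fin N) → ℝ}
    {x : EuclideanSpace ℝ (Fin N)} (hx : x ∉ tsupport φ) : gradient φ x = 0 := by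
  have h0 : φ =ᶠ[nhds x] (fun _ => (0:ℝ)) := notMem_tsupport_iff_eventuallyEq.mp hx
  have : fderiv ℝ φ x = 0 := by
    rw [h0.fderiv_eq]; exact fderiv_const_apply 0
  simp [gradient, this]

private lemma integrable_shape' {N : ℕ} {Ω : Set (EuclideanSpace ℝ (Fin N))} (hΩ : IsOpen Ω)
    {s r : EuclideanSpace ℝ (Fin N) → ℝ} (hs : Continuous s) (hsc : HasCompactSupport s)
    (hsupp : tsupport s ⊆ Ω) (hr : ∀ x ∈ Ω, ContinuousAt r x) :
    Integrable (fun x => s x * r x) := by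
  have hc : Continuous fun x => s x * r x := by
    rw [continuous_iff_continuousAt]
    intro x
    by_cases hx : x ∈ Ω
    · exact (hs.continuousAt).mul (hr x hx)
    · have h0 : s =ᶠ[nhds x] (fun _ => (0:ℝ)) :=
        notMem_tsupport_iff_eventuallyEq.mp (fun h => hx (hsupp h))
      have : (fun x => s x * r x) =ᶠ[nhds x] (fun _ => (0:ℝ)) := by
        filter_upwards [h0] with y hy; simp [hy]
      exact ContinuousAt.congr continuousAt_const this.symm
  exact hc.integrable_of_hasCompactSupport (hsc.mul_right)

private lemma integrable_grad_sq' {N : ℕ} {φ : EuclideanSpace ℝ (Fin N) → ℝ}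
    (hφ : ContDiff ℝ 1 φ) (hφc : HasCompactSupport φ) :
    Integrable (fun x => ‖gradient φ x‖ ^ 2) := by
  have hg : Continuous fun x => gradient φ x := by
    have h1 : Continuous fun x => fderiv ℝ φ x := hφ.continuous_fderiv one_ne_zero
    exact (InnerProductSpace.toDual ℝ _).symm.continuous.comp h1
  have hc : Continuous fun x => ‖gradient φ x‖ ^ 2 := (hg.norm).pow 2
  refine hc.integrable_of_hasCompactSupport ?_
  refine HasCompactSupport.intro hφc ?_
  intro x hx
  rw [gradient_eq_zero_of_nmem' hx]
  simp

private lemma contDiffAt_dirderiv' {N : ℕ} {w : EuclideanSpace ℝ (Fin N) → ℝ}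
    {x : EuclideanSpace ℝ (Fin N)} (hw : ContDiffAt ℝ 2 w x) (i : Fin N) :
    ContDiffAt ℝ 1 (fun y => fderiv ℝ w y (EuclideanSpace.single i 1)) x :=
  (hw.fderiv_right (by norm_num)).clm_apply contDiffAt_const

private lemma continuousAt_lap' {N : ℕ} {w : EuclideanSpace ℝ (Fin N) → ℝ}
    {x : EuclideanSpace ℝ (Fin N)} (hw : ContDiffAt ℝ 2 w x) :
    ContinuousAt (lap w) x := by
  have h : ∀ i : Fin N, ContinuousAt
      (fun y => fderiv ℝ (fun z => fderiv ℝ w z (EuclideanSpace.single i 1)) y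
        (EuclideanSpace.single i 1)) x := by
    intro i
    have h1 : ContDiffAt ℝ 0 (fderiv ℝ (fun z => fderiv ℝ w z (EuclideanSpace.single i 1))) x :=
      (contDiffAt_dirderiv' hw i).fderiv_right (by norm_num)
    exact (h1.clm_apply contDiffAt_const).continuousAt
  exact tendsto_finset_sum _ fun i _ => h i

private lemma stability_ibp' {N : ℕ} {Ω : Set (EuclideanSpace ℝ (Fin N))} (hΩ : IsOpen Ω)
    {w : EuclideanSpace ℝ (Fin N) → ℝ} (hw : ContDiffOn ℝ 2 w Ω) (hwpos : ∀ x ∈ Ω, 0 < w x)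
    {φ : EuclideanSpace ℝ (Fin N) → ℝ} (hφ : ContDiff ℝ 1 φ) (hφc : HasCompactSupport φ)
    (hφΩ : tsupport φ ⊆ Ω) :
    ∫ x, (-lap w x) * (φ x ^ 2 / w x) ≤ ∫ x, ‖gradient φ x‖ ^ 2 := by
  classical
  set e : Fin N → EuclideanSpace ℝ (Fin N) := fun i => EuclideanSpace.single i 1 with he
  have hK : IsCompact (tsupport φ) := hφc
  obtain ⟨L, hL, hKL, hLΩ⟩ := exists_compact_between hK hΩ hφΩ
  obtain ⟨χ₀, hχ1, hχ0, hχmem⟩ :=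
    exists_contMDiffMap_one_nhds_of_subset_interior
      (modelWithCornersSelf ℝ (EuclideanSpace ℝ (Fin N))) (n := (⊤ : ℕ∞)) hK.isClosed hKL
  set χ : EuclideanSpace ℝ (Fin N) → ℝ := ⇑χ₀ with hχdef
  have hχ : ContDiff ℝ 1 χ := by
    have h := contMDiff_iff_contDiff.mp χ₀.contMDiff
    exact h.of_le (by exact_mod_cast le_top)
  have hχK : ∀ x ∈ tsupport φ, ∀ᶠ y in nhds x, χ y = 1 :=
    eventually_nhdsSet_iff_forall.mp hχ1
  set Dw : Fin N → EuclideanSpace ℝ (Fin N) → ℝ := fun i y => fderiv ℝ w y (e i) with hDwdef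
  set g : Fin N → EuclideanSpace ℝ (Fin N) → ℝ := fun i y => χ y * Dw i y with hgdef
  set h : EuclideanSpace ℝ (Fin N) → ℝ := fun y => φ y ^ 2 * (w y)⁻¹ with hhdef
  have hwx : ∀ x ∈ Ω, ContDiffAt ℝ 2 w x := fun x hx => hw.contDiffAt (hΩ.mem_nhds hx)
  have hDw : ∀ (i : Fin N), ∀ x ∈ Ω, ContDiffAt ℝ 1 (Dw i) x := fun i x hx =>
    contDiffAt_dirderiv' (hwx x hx) i
  have hφ0 : ∀ x ∉ tsupport φ, φ x = 0 := fun x hx => image_eq_zero_of_notMem_tsupport hx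
  have hφev : ∀ x ∉ tsupport φ, ∀ᶠ y in nhds x, φ y = 0 := by
    intro x hx
    have := notMem_tsupport_iff_eventuallyEq.mp hx
    filter_upwards [this] with y hy using hy
  have hDφ0 : ∀ x ∉ tsupport φ, fderiv ℝ φ x = 0 := by
    intro x hx
    rw [(notMem_tsupport_iff_eventuallyEq.mp hx).fderiv_eq]
    exact fderiv_const_apply 0
  have hhCD : ∀ x, ContDiffAt ℝ 1 h x := by
    intro x
    by_cases hx : x ∈ Ω
    · exact (hφ.contDiffAt.pow 2).mul
        (((hwx x hx).of_le (by norm_num)).inv (hwpos x hx).ne')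
    · have hxK : x ∉ tsupport φ := fun hK' => hx (hφΩ hK')
      refine ContDiffAt.congr_of_eventuallyEq (contDiffAt_const (c := (0:ℝ))) ?_
      filter_upwards [hφev x hxK] with y hy
      simp [hhdef, hy]
  have hhC1 : ContDiff ℝ 1 h := contDiff_iff_contDiffAt.2 hhCD
  have hh0 : ∀ x ∉ tsupport φ, h x = 0 := fun x hx => by simp [hhdef, hφ0 x hx]
  have hhcs : HasCompactSupport h := HasCompactSupport.intro hK hh0
  have hfderivh0 : ∀ x ∉ tsupport φ, fderiv ℝ h x = 0 := by
    intro x hx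
    have hev : h =ᶠ[nhds x] (fun _ => (0:ℝ)) := by
      filter_upwards [hφev x hx] with y hy; simp [hhdef, hy]
    rw [hev.fderiv_eq]; exact fderiv_const_apply 0
  have hgCD : ∀ (i : Fin N) x, ContDiffAt ℝ 1 (g i) x := by
    intro i x
    by_cases hx : x ∈ Ω
    · exact (hχ.contDiffAt).mul (hDw i x hx)
    · have hxL : x ∉ L := fun hx' => hx (hLΩ hx')
      refine ContDiffAt.congr_of_eventuallyEq (contDiffAt_const (c := (0:ℝ))) ?_
      have hev : ∀ᶠ y in nhds x, χ y = 0 := by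
        filter_upwards [hL.isClosed.isOpen_compl.mem_nhds hxL] with y hy
        exact hχ0 y hy
      filter_upwards [hev] with y hy
      simp [hgdef, hy]
  have hgC1 : ∀ i : Fin N, ContDiff ℝ 1 (g i) := fun i => contDiff_iff_contDiffAt.2 (hgCD i)
  have hg0 : ∀ (i : Fin N), ∀ x ∉ L, g i x = 0 := fun i x hx => by simp [hgdef, hχ0 x hx]
  have I1 : ∀ i : Fin N, Integrable (fun x => h x * fderiv ℝ (g i) x (e i)) := by
    intro i
    have hc : Continuous fun x => fderiv ℝ (g i) x (e i) :=
      ((hgC1 i).continuous_fderiv one_ne_zero).clm_apply continuous_const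
    exact ((hhC1.continuous).mul hc).integrable_of_hasCompactSupport (hhcs.mul_right)
  have I2 : ∀ i : Fin N, Integrable (fun x => fderiv ℝ h x (e i) * g i x) := by
    intro i
    have hc : Continuous fun x => fderiv ℝ h x (e i) :=
      (hhC1.continuous_fderiv one_ne_zero).clm_apply continuous_const
    have hcs : HasCompactSupport fun x => fderiv ℝ h x (e i) :=
      HasCompactSupport.intro hK fun x hx => by rw [hfderivh0 x hx]; rfl
    exact (hc.mul ((hgC1 i).continuous)).integrable_of_hasCompactSupport (hcs.mul_right)
  have I3 : ∀ i : Fin N, Integrable (fun x => h x * g i x) := fun i =>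
    ((hhC1.continuous).mul ((hgC1 i).continuous)).integrable_of_hasCompactSupport
      (hhcs.mul_right)
  have IBP : ∀ i : Fin N,
      ∫ x, h x * fderiv ℝ (g i) x (e i) = - ∫ x, fderiv ℝ h x (e i) * g i x := fun i =>
    integral_mul_fderiv_eq_neg_fderiv_mul_of_integrable (I2 i) (I1 i) (I3 i)
      (fun x _ => ((hhCD x).differentiableAt one_ne_zero))
      (fun x _ => ((hgCD i x).differentiableAt one_ne_zero))
  have E1 : ∀ (i : Fin N) x, h x * fderiv ℝ (g i) x (e i)
      = h x * fderiv ℝ (fun y => fderiv ℝ w y (e i)) x (e i) := by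
    intro i x
    by_cases hx : x ∈ tsupport φ
    · have hev : g i =ᶠ[nhds x] (fun y => fderiv ℝ w y (e i)) := by
        filter_upwards [hχK x hx] with y hy
        simp [hgdef, hDwdef, hy]
      rw [hev.fderiv_eq]
    · rw [hh0 x hx]; ring
  have E2 : ∀ (i : Fin N) x, fderiv ℝ h x (e i) * g i x
      = 2 * φ x * fderiv ℝ φ x (e i) * (Dw i x / w x) - (φ x * (Dw i x / w x)) ^ 2 := by
    intro i x
    by_cases hx : x ∈ tsupport φ
    · have hxΩ : x ∈ Ω := hφΩ hx
      have hwne : w x ≠ 0 := (hwpos x hxΩ).ne'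
      have hφd : HasFDerivAt φ (fderiv ℝ φ x) x := (hφ.differentiable one_ne_zero x).hasFDerivAt
      have hwd : HasFDerivAt w (fderiv ℝ w x) x :=
        (((hwx x hxΩ).of_le (show (1 : WithTop ℕ∞) ≤ 2 by norm_num)).differentiableAt one_ne_zero).hasFDerivAt
      have hinv : HasFDerivAt (fun y => (w y)⁻¹) ((-((w x) ^ 2)⁻¹) • fderiv ℝ w x) x := by
        have := (hasDerivAt_inv hwne).comp_hasFDerivAt x hwd
        exact this
      have hsq : HasFDerivAt (fun y => φ y ^ 2)
          ((2 * φ x) • fderiv ℝ φ x) x := by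
        have h2 : HasFDerivAt (fun y => φ y * φ y)
            (φ x • fderiv ℝ φ x + φ x • fderiv ℝ φ x) x := hφd.mul hφd
        have heq : (fun y => φ y ^ 2) = fun y => φ y * φ y := by funext y; ring
        rw [heq, two_mul, add_smul]
        exact h2
      have hhd : HasFDerivAt h
          ((φ x ^ 2) • ((-((w x) ^ 2)⁻¹) • fderiv ℝ w x)
            + (w x)⁻¹ • ((2 * φ x) • fderiv ℝ φ x)) x := hsq.mul hinv
      have hfd : fderiv ℝ h x (e i)
          = φ x ^ 2 * (-((w x) ^ 2)⁻¹ * Dw i x) + (w x)⁻¹ * (2 * φ x * fderiv ℝ φ x (e i)) := by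
        rw [hhd.fderiv]
        simp [hDwdef, ContinuousLinearMap.add_apply, ContinuousLinearMap.smul_apply,
          smul_eq_mul]
        try ring
      have hχx : χ x = 1 := (hχK x hx).self_of_nhds
      rw [hfd]
      simp only [hgdef]
      rw [hχx]
      field_simp
      ring
    · rw [hfderivh0 x hx, hφ0 x hx, hDφ0 x hx]
      simp
  have key : ∀ x, (-lap w x) * (φ x ^ 2 / w x)
      = ∑ i : Fin N, -(h x * fderiv ℝ (g i) x (e i)) := by
    intro x
    have hs : lap w x * (φ x ^ 2 * (w x)⁻¹)
        = ∑ i : Fin N, h x * fderiv ℝ (fun y => fderiv ℝ w y (e i)) x (e i) := by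
      simp only [lap, Finset.sum_mul]
      exact Finset.sum_congr rfl fun i _ => by simp only [hhdef]; ring
    calc (-lap w x) * (φ x ^ 2 / w x)
        = -(lap w x * (φ x ^ 2 * (w x)⁻¹)) := by rw [div_eq_mul_inv]; ring
      _ = -∑ i : Fin N, h x * fderiv ℝ (fun y => fderiv ℝ w y (e i)) x (e i) := by rw [hs]
      _ = ∑ i : Fin N, -(h x * fderiv ℝ (fun y => fderiv ℝ w y (e i)) x (e i)) := by
          rw [← Finset.sum_neg_distrib]
      _ = ∑ i : Fin N, -(h x * fderiv ℝ (g i) x (e i)) :=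
          Finset.sum_congr rfl fun i _ => by rw [E1 i x]
  have step1 : ∫ x, (-lap w x) * (φ x ^ 2 / w x)
      = ∑ i : Fin N, ∫ x, fderiv ℝ h x (e i) * g i x := by
    rw [integral_congr_ae (Filter.Eventually.of_forall key)]
    have hint : ∀ i ∈ (Finset.univ : Finset (Fin N)),
        Integrable (fun x => -(h x * fderiv ℝ (g i) x (e i))) volume :=
      fun i _ => (I1 i).neg
    rw [integral_finset_sum _ hint]
    refine Finset.sum_congr rfl fun i _ => ?_
    rw [integral_neg, IBP i, neg_neg]
  rw [step1, ← integral_finset_sum _ fun i _ => I2 i]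
  refine integral_mono (integrable_finset_sum _ fun i _ => I2 i)
    (integrable_grad_sq' hφ hφc) ?_
  intro x
  show ∑ i : Fin N, fderiv ℝ h x (e i) * g i x ≤ ‖gradient φ x‖ ^ 2
  rw [grad_sq_eq']
  refine Finset.sum_le_sum fun i _ => ?_
  rw [E2 i x]
  nlinarith [sq_nonneg (fderiv ℝ φ x (e i) - φ x * (Dw i x / w x))]

end AuxStability

/-- **Lemma 1.** Stability inequality: for a stable solution of the system
`-Δu = g(v)`, `-Δv = f(u)` with nondecreasing `C¹` nonlinearities, and any
`φ ∈ C¹_c(Ω)`, one has `∫ √(f'(u) g'(v)) φ² ≤ ∫ |∇φ|²`. -/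


theorem stability_inequality {N : ℕ} (hN : 1 ≤ N)
    (Ω : Set (EuclideanSpace ℝ (Fin N))) (hΩ : IsBoundedDomain Ω)
    (f g : ℝ → ℝ) (hf : ContDiff ℝ 1 f) (hg : ContDiff ℝ 1 g)
    (hfmono : Monotone f) (hgmono : Monotone g)
    (u v : EuclideanSpace ℝ (Fin N) → ℝ)
    (huv : IsStableSystemSolution Ω f g u v)
    (φ : EuclideanSpace ℝ (Fin N) → ℝ)
    (hφ : ContDiff ℝ 1 φ) (hφc : HasCompactSupport φ) (hφΩ : tsupport φ ⊆ Ω) :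
    ∫ x in Ω, Real.sqrt (deriv f (u x) * deriv g (v x)) * φ x ^ 2 ≤
      ∫ x in Ω, ‖gradient φ x‖ ^ 2 := by
  classical
  obtain ⟨⟨hu2, hv2, hueq, hveq, hub, hvb⟩, lam1, φ₁, ψ₁, hlam1, hφ₁2, hψ₁2, hφ₁pos, hψ₁pos,
    heig1, heig2, hφ₁b, hψ₁b⟩ := huv
  have hΩo : IsOpen Ω := hΩ.1
  have hKΩ : tsupport φ ⊆ Ω := hφΩ
  have hφ0 : ∀ x ∉ tsupport φ, φ x = 0 := fun x hx => image_eq_zero_of_notMem_tsupport hx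
  have hφ0Ω : ∀ x ∉ Ω, φ x = 0 := fun x hx => hφ0 x (fun h => hx (hKΩ h))
  -- continuity of u, v at points of Ω
  have hcont : ∀ (p : EuclideanSpace ℝ (Fin N) → ℝ), ContDiffOn ℝ 2 p (closure Ω) →
      ∀ x ∈ Ω, ContinuousAt p x := by
    intro p hp x hx
    have hmem : closure Ω ∈ nhds x := Filter.mem_of_superset (hΩo.mem_nhds hx) subset_closure
    exact (hp.continuousOn.continuousAt hmem)
  have hΩsub : Ω ⊆ closure Ω := subset_closure
  have hφ₁Ω : ContDiffOn ℝ 2 φ₁ Ω := hφ₁2.mono hΩsub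
  have hψ₁Ω : ContDiffOn ℝ 2 ψ₁ Ω := hψ₁2.mono hΩsub
  -- the two integrands and auxiliary functions
  set A : EuclideanSpace ℝ (Fin N) → ℝ :=
    fun x => Real.sqrt (deriv f (u x) * deriv g (v x)) * φ x ^ 2 with hAdef
  set P1 : EuclideanSpace ℝ (Fin N) → ℝ := fun x => (-lap φ₁ x) * (φ x ^ 2 / φ₁ x) with hP1def
  set P2 : EuclideanSpace ℝ (Fin N) → ℝ := fun x => (-lap ψ₁ x) * (φ x ^ 2 / ψ₁ x) with hP2def
  -- integrability
  have hsq_cont : Continuous fun x => φ x ^ 2 := (hφ.continuous).pow 2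
  have hsq_cs : HasCompactSupport fun x => φ x ^ 2 := by
    refine HasCompactSupport.intro hφc fun x hx => by rw [hφ0 x hx]; ring
  have hsq_supp : tsupport (fun x => φ x ^ 2) ⊆ Ω := by
    refine subset_trans (closure_mono fun x hx => ?_) hKΩ
    simp only [Function.mem_support] at hx ⊢
    exact fun h0 => hx (by rw [h0]; ring)
  have IA : Integrable A := by
    have hr : ∀ x ∈ Ω, ContinuousAt
        (fun x => Real.sqrt (deriv f (u x) * deriv g (v x))) x := by
      intro x hx
      have h1 : ContinuousAt (fun x => deriv f (u x)) x :=
        ((hf.continuous_deriv le_rfl).continuousAt).comp (hcont u hu2 x hx)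
      have h2 : ContinuousAt (fun x => deriv g (v x)) x :=
        ((hg.continuous_deriv le_rfl).continuousAt).comp (hcont v hv2 x hx)
      exact (Real.continuous_sqrt.continuousAt).comp (h1.mul h2)
    have := integrable_shape' hΩo hsq_cont hsq_cs hsq_supp hr
    exact this.congr (Filter.Eventually.of_forall fun x => by simp [hAdef, mul_comm])
  have IP : ∀ (w : EuclideanSpace ℝ (Fin N) → ℝ), ContDiffOn ℝ 2 w Ω → (∀ x ∈ Ω, 0 < w x) →
      Integrable (fun x => (-lap w x) * (φ x ^ 2 / w x)) := by
    intro w hw hwpos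
    have hr : ∀ x ∈ Ω, ContinuousAt (fun x => -lap w x / w x) x := by
      intro x hx
      have h1 : ContinuousAt (lap w) x := continuousAt_lap' (hw.contDiffAt (hΩo.mem_nhds hx))
      have h2 : ContinuousAt w x := (hw.contDiffAt (hΩo.mem_nhds hx)).continuousAt
      exact (h1.neg).div h2 (hwpos x hx).ne'
    have := integrable_shape' hΩo hsq_cont hsq_cs hsq_supp hr
    exact this.congr (Filter.Eventually.of_forall fun x => by ring)
  have IP1 : Integrable P1 := IP φ₁ hφ₁Ω hφ₁pos
  have IP2 : Integrable P2 := IP ψ₁ hψ₁Ω hψ₁pos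
  -- pointwise inequality
  have pw : ∀ x, A x ≤ (1/2 : ℝ) * P1 x + (1/2 : ℝ) * P2 x := by
    intro x
    by_cases hx : x ∈ tsupport φ
    · have hxΩ : x ∈ Ω := hKΩ hx
      have hp : 0 < φ₁ x := hφ₁pos x hxΩ
      have hs : 0 < ψ₁ x := hψ₁pos x hxΩ
      have ha : 0 ≤ deriv f (u x) :=
        monotone_deriv_nonneg' hfmono ((hf.differentiable one_ne_zero) (u x))
      have hb : 0 ≤ deriv g (v x) :=
        monotone_deriv_nonneg' hgmono ((hg.differentiable one_ne_zero) (v x))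
      set a := deriv f (u x)
      set b := deriv g (v x)
      have hA1 : -lap φ₁ x = b * ψ₁ x + lam1 * φ₁ x := by
        have := heig1 x hxΩ; linarith
      have hA2 : -lap ψ₁ x = a * φ₁ x + lam1 * ψ₁ x := by
        have := heig2 x hxΩ; linarith
      have ht1 : (0:ℝ) ≤ b * ψ₁ x / φ₁ x := by positivity
      have ht2 : (0:ℝ) ≤ a * φ₁ x / ψ₁ x := by positivity
      have hmul : (b * ψ₁ x / φ₁ x) * (a * φ₁ x / ψ₁ x) = a * b := by
        field_simp
      have hsqrt : Real.sqrt (a * b) ≤ ((b * ψ₁ x / φ₁ x) + (a * φ₁ x / ψ₁ x)) / 2 := by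
        rw [← hmul]
        exact sqrt_mul_le_half' ht1 ht2
      have hq : (0:ℝ) ≤ φ x ^ 2 := sq_nonneg _
      simp only [hAdef, hP1def, hP2def]
      rw [hA1, hA2]
      have e1 : (b * ψ₁ x + lam1 * φ₁ x) * (φ x ^ 2 / φ₁ x)
          = (b * ψ₁ x / φ₁ x) * φ x ^ 2 + lam1 * φ x ^ 2 := by
        field_simp
      have e2 : (a * φ₁ x + lam1 * ψ₁ x) * (φ x ^ 2 / ψ₁ x)
          = (a * φ₁ x / ψ₁ x) * φ x ^ 2 + lam1 * φ x ^ 2 := by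
        field_simp
      rw [e1, e2]
      nlinarith [mul_le_mul_of_nonneg_right hsqrt hq, mul_nonneg hlam1 hq]
    · have h0 : φ x = 0 := hφ0 x hx
      simp [hAdef, hP1def, hP2def, h0]
  -- convert set integrals to global integrals
  have hL : ∫ x in Ω, Real.sqrt (deriv f (u x) * deriv g (v x)) * φ x ^ 2 = ∫ x, A x :=
    setIntegral_eq_integral_of_forall_compl_eq_zero fun x hx => by
      simp [hAdef, hφ0Ω x hx]
  have hR : ∫ x in Ω, ‖gradient φ x‖ ^ 2 = ∫ x, ‖gradient φ x‖ ^ 2 :=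
    setIntegral_eq_integral_of_forall_compl_eq_zero fun x hx => by
      rw [gradient_eq_zero_of_nmem' (fun h => hx (hKΩ h))]; simp
  rw [hL, hR]
  calc ∫ x, A x ≤ ∫ x, ((1/2 : ℝ) * P1 x + (1/2 : ℝ) * P2 x) := by
        refine integral_mono IA ?_ pw
        exact (IP1.const_mul _).add (IP2.const_mul _)
    _ = ((1/2 : ℝ) * ∫ x, P1 x) + ((1/2 : ℝ) * ∫ x, P2 x) := by
        rw [integral_add (IP1.const_mul _) (IP2.const_mul _), integral_const_mul,
          integral_const_mul]
    _ ≤ ((1/2 : ℝ) * ∫ x, ‖gradient φ x‖ ^ 2) + ((1/2 : ℝ) * ∫ x, ‖gradient φ x‖ ^ 2) := by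
        have h1 := stability_ibp' hΩo hφ₁Ω hφ₁pos hφ hφc hKΩ
        have h2 := stability_ibp' hΩo hψ₁Ω hψ₁pos hφ hφc hKΩ
        have half : (0:ℝ) ≤ 1/2 := by norm_num
        simp only [hP1def, hP2def]
        exact add_le_add (mul_le_mul_of_nonneg_left h1 half)
          (mul_le_mul_of_nonneg_left h2 half)
    _ = ∫ x, ‖gradient φ x‖ ^ 2 := by ring
end

section
/- Let N ≥ 1, Ω ⊂ ℝ^N a smoothly bounded domain, f, g nondecreasing C¹ functions, and (u, v) ∈ C²(Ω̄)² a solution of −Δu = g(v), −Δv = f(u) in Ω, u = v = 0 on ∂Ω. Suppose λ₁ ≥ 0 and positive φ₁, ψ₁ ∈ C²(Ω̄) satisfy −Δφ₁ − g′(v)ψ₁ = λ₁φ₁ and −Δψ₁ − f′(u)φ₁ = λ₁ψ₁ in Ω with φ₁ = ψ₁ = 0 on ∂Ω. Then for every φ ∈ C¹_c(Ω): ∫_Ω g′(v) (ψ₁/φ₁) φ² dx ≤ ∫_Ω |∇φ|² dx, and likewise ∫_Ω f′(u) (φ₁/ψ₁) φ² dx ≤ ∫_Ω |∇φ|² dx.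 -/
open MeasureTheory Real
open scoped RealInnerProductSpace

section AuxProofs
open MeasureTheory Set Filter

theorem mono_deriv_nonneg (g : ℝ → ℝ) (hd : Monotone g) (x : ℝ) : 0 ≤ deriv g x := by
  by_cases h : DifferentiableAt ℝ g x
  · have h1 : Tendsto (slope g x) (nhdsWithin x (Set.Ioi x)) (nhds (deriv g x)) :=
      (hasDerivAt_iff_tendsto_slope.mp h.hasDerivAt).mono_left
        (nhdsWithin_mono x fun y hy => ne_of_gt hy)
    refine ge_of_tendsto h1 ?_
    filter_upwards [self_mem_nhdsWithin] with y hy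
    rw [slope_def_field, div_eq_inv_mul]
    exact mul_nonneg (inv_nonneg.2 (sub_nonneg.2 (le_of_lt hy))) (sub_nonneg.2 (hd (le_of_lt hy)))
  · rw [deriv_zero_of_not_differentiableAt h]

theorem pi_integral_fderiv_single_eq_zero {n : ℕ} (H : (Fin (n+1) → ℝ) → ℝ)
    (hH : ContDiff ℝ 1 H) (hc : HasCompactSupport H) (i : Fin (n+1)) :
    ∫ y, fderiv ℝ H y (Pi.single i 1) = 0 := by
  obtain ⟨R, hR0, hRsub⟩ := hc.isBounded.subset_ball_lt 0 0
  set a : Fin (n+1) → ℝ := fun _ => -R with ha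
  set b : Fin (n+1) → ℝ := fun _ => R with hb
  have hle : a ≤ b := fun j => by simp [ha, hb]; linarith
  have hball_sub : Metric.ball (0 : Fin (n+1) → ℝ) R ⊆ Icc a b := by
    intro y hy
    simp only [Metric.mem_ball, dist_zero_right] at hy
    refine ⟨fun j => ?_, fun j => ?_⟩ <;>
      have := (abs_le.1 ((norm_le_pi_norm y j).trans hy.le)) <;>
      · simp only [ha, hb, Real.norm_eq_abs] at this ⊢; linarith [this.1, this.2]
  have hH0 : ∀ y : Fin (n+1) → ℝ, y ∉ Metric.ball (0 : Fin (n+1) → ℝ) R → H y = 0 := by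
    intro y hy
    exact image_eq_zero_of_notMem_tsupport (fun hmem => hy (hRsub hmem))
  have hd0 : ∀ y : Fin (n+1) → ℝ, y ∉ Metric.ball (0:Fin (n+1) → ℝ) R → fderiv ℝ H y = 0 := by
    intro y hy
    by_contra hne
    exact hy (hRsub (support_fderiv_subset ℝ (by simpa using hne)))
  classical
  have hsum : ∀ x, (∑ j : Fin (n+1), (if j = i then fderiv ℝ H x else 0) (Pi.single j 1))
      = fderiv ℝ H x (Pi.single i 1) := by
    intro x
    rw [Finset.sum_eq_single i]
    · simp
    · intro j _ hj; simp [hj]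
    · simp
  have key := integral_divergence_of_hasFDerivAt_off_countable' a b hle
    (fun j x => if j = i then H x else 0)
    (fun j x => if j = i then fderiv ℝ H x else 0) ∅ countable_empty
    (fun j => by
      by_cases hj : j = i
      · simp only [if_pos hj]; exact hH.continuous.continuousOn
      · simp only [if_neg hj]; exact continuousOn_const)
    (fun x _ j => by
      by_cases hj : j = i
      · simpa [hj] using (hH.differentiable one_ne_zero x).hasFDerivAt
      · simpa [hj] using hasFDerivAt_const (0:ℝ) x)
    (by
      simp only [hsum]
      exact (((hH.continuous_fderiv one_ne_zero).clm_apply continuous_const)).continuousOn.integrableOn_compact isCompact_Icc)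
  have hfaces : ∀ (j : Fin (n+1)) (c : ℝ), c = a j ∨ c = b j →
      (∫ (x : Fin n → ℝ) in Icc (a ∘ j.succAbove) (b ∘ j.succAbove),
        (if j = i then H (j.insertNth c x) else 0)) = 0 := by
    intro j c hcj
    by_cases hj : j = i
    · rw [MeasureTheory.setIntegral_eq_zero_of_forall_eq_zero]
      intro x _
      rw [if_pos hj]
      apply hH0
      simp only [Metric.mem_ball, dist_zero_right, not_lt]
      have h1 : |(j.insertNth c x : Fin (n+1) → ℝ) j| ≤ ‖(j.insertNth c x : Fin (n+1) → ℝ)‖ := by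
        simpa [Real.norm_eq_abs] using norm_le_pi_norm (j.insertNth c x : Fin (n+1) → ℝ) j
      rw [Fin.insertNth_apply_same] at h1
      refine le_trans ?_ h1
      rcases hcj with h | h <;> rw [h] <;> simp [ha, hb, abs_of_pos hR0, abs_neg]
    · simp [hj]
  rw [Finset.sum_eq_zero (fun j _ => by
    rw [hfaces j (b j) (Or.inr rfl), hfaces j (a j) (Or.inl rfl), sub_zero])] at key
  simp only [hsum] at key
  rw [← key]
  symm
  apply setIntegral_eq_integral_of_forall_compl_eq_zero
  intro x hx
  rw [hd0 x (fun hball => hx (hball_sub hball))]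
  rfl

theorem euclidean_integral_fderiv_single_eq_zero {N : ℕ} (hN : 1 ≤ N)
    (h : EuclideanSpace ℝ (Fin N) → ℝ) (hh : ContDiff ℝ 1 h) (hc : HasCompactSupport h)
    (i : Fin N) :
    ∫ x, fderiv ℝ h x (EuclideanSpace.single i 1) = 0 := by
  obtain ⟨n, rfl⟩ : ∃ n, N = n + 1 := ⟨N - 1, (Nat.succ_pred_eq_of_pos hN).symm⟩
  set eL := EuclideanSpace.equiv (Fin (n+1)) ℝ with heL
  have hH : ContDiff ℝ 1 (h ∘ eL.symm) := hh.comp eL.symm.contDiff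
  have hcH : HasCompactSupport (h ∘ eL.symm) := hc.comp_homeomorph eL.symm.toHomeomorph
  have key := pi_integral_fderiv_single_eq_zero (h ∘ eL.symm) hH hcH i
  have hmp := EuclideanSpace.volume_preserving_symm_measurableEquiv_toLp (Fin (n+1))
  have hemb : MeasurableEmbedding ((MeasurableEquiv.toLp 2 (Fin (n+1) → ℝ)).symm) :=
    ((MeasurableEquiv.toLp 2 (Fin (n+1) → ℝ)).symm).measurableEmbedding
  have hint := hmp.integral_comp hemb (fun y => fderiv ℝ (h ∘ eL.symm) y (Pi.single i 1))
  rw [← hint] at key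
  rw [← key]
  apply integral_congr_ae
  filter_upwards with x
  have h1 : fderiv ℝ (h ∘ eL.symm) ((MeasurableEquiv.toLp 2 (Fin (n+1) → ℝ)).symm x) =
      fderiv ℝ h x ∘L (eL.symm : (Fin (n+1) → ℝ) →L[ℝ] EuclideanSpace ℝ (Fin (n+1))) := by
    have : ((MeasurableEquiv.toLp 2 (Fin (n+1) → ℝ)).symm x : Fin (n+1) → ℝ) = eL x := rfl
    rw [this]
    rw [fderiv_comp _ (hh.differentiable one_ne_zero _) (eL.symm.differentiableAt)]
    simp [eL.symm.fderiv]
  rw [h1]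
  simp only [ContinuousLinearMap.coe_comp', Function.comp_apply]
  congr 1

theorem key_ineq {N : ℕ} (hN : 1 ≤ N) (Ω : Set (EuclideanSpace ℝ (Fin N))) (hΩo : IsOpen Ω)
    (Φ : EuclideanSpace ℝ (Fin N) → ℝ) (hΦ : ContDiffOn ℝ 2 Φ (closure Ω))
    (hΦpos : ∀ x ∈ Ω, 0 < Φ x)
    (q : EuclideanSpace ℝ (Fin N) → ℝ)
    (hqΦ : ∀ x ∈ Ω, q x * Φ x ≤ -lap Φ x)
    (φ : EuclideanSpace ℝ (Fin N) → ℝ)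
    (hφ : ContDiff ℝ 1 φ) (hφc : HasCompactSupport φ) (hφΩ : tsupport φ ⊆ Ω) :
    ∫ x in Ω, q x * φ x ^ 2 ≤ ∫ x in Ω, ‖gradient φ x‖ ^ 2 := by
  classical
  set K := tsupport φ with hK
  have hKc : IsCompact K := hφc
  have hKcl : IsClosed K := isClosed_tsupport φ
  set w : EuclideanSpace ℝ (Fin N) → ℝ := fun y => (φ y * φ y) * (Φ y)⁻¹ with hw
  set h : Fin N → EuclideanSpace ℝ (Fin N) → ℝ :=
    fun i y => w y * fderiv ℝ Φ y (EuclideanSpace.single i 1) with hh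
  set D : EuclideanSpace ℝ (Fin N) → ℝ :=
    fun y => ∑ i : Fin N, fderiv ℝ (h i) y (EuclideanSpace.single i 1) with hD
  have hw0 : ∀ y, y ∉ K → w y = 0 := fun y hy => by
    simp [hw, image_eq_zero_of_notMem_tsupport hy]
  have hΦat : ∀ x ∈ Ω, ContDiffAt ℝ 2 Φ x := fun x hx =>
    hΦ.contDiffAt (Filter.mem_of_superset (hΩo.mem_nhds hx) subset_closure)
  have hgi : ∀ (i : Fin N), ∀ x ∈ Ω,
      ContDiffAt ℝ 1 (fun y => fderiv ℝ Φ y (EuclideanSpace.single i 1)) x := by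
    intro i x hx
    exact ((hΦat x hx).fderiv_right (by norm_num)).clm_apply contDiffAt_const
  have hwat : ∀ x ∈ Ω, ContDiffAt ℝ 1 w x := by
    intro x hx
    exact ((hφ.contDiffAt.mul hφ.contDiffAt).mul
      (((hΦat x hx).of_le (by norm_num)).inv (hΦpos x hx).ne'))
  have hhi : ∀ i : Fin N, ContDiff ℝ 1 (h i) := by
    intro i
    rw [contDiff_iff_contDiffAt]
    intro x
    by_cases hx : x ∈ Ω
    · exact (hwat x hx).mul (hgi i x hx)
    · have hxK : x ∉ K := fun hmem => hx (hφΩ hmem)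
      refine (contDiffAt_const (c := (0:ℝ))).congr_of_eventuallyEq ?_
      filter_upwards [hKcl.isOpen_compl.mem_nhds hxK] with y hy
      simp [hh, hw0 y hy]
  have hhsupp : ∀ i : Fin N, tsupport (h i) ⊆ K := by
    intro i
    refine closure_minimal (fun y hy => ?_) hKcl
    by_contra hyK
    exact hy (by simp [hh, hw0 y hyK])
  have hhic : ∀ i : Fin N, HasCompactSupport (h i) :=
    fun i => HasCompactSupport.intro hKc fun y hy => by simp [hh, hw0 y hy]
  have hdhi0 : ∀ (i : Fin N) y, y ∉ K → fderiv ℝ (h i) y = 0 := by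
    intro i y hy
    by_contra hne
    exact hy (hhsupp i (support_fderiv_subset ℝ (by simpa using hne)))
  have hDcont : ∀ i : Fin N,
      Continuous (fun y => fderiv ℝ (h i) y (EuclideanSpace.single i 1)) :=
    fun i => ((hhi i).continuous_fderiv one_ne_zero).clm_apply continuous_const
  have hDicompact : ∀ i : Fin N,
      HasCompactSupport (fun y => fderiv ℝ (h i) y (EuclideanSpace.single i 1)) :=
    fun i => HasCompactSupport.intro hKc fun y hy => by rw [hdhi0 i y hy]; rfl
  have hDint0 : ∫ y, D y = 0 := by
    rw [hD]
    rw [integral_finset_sum]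
    · exact Finset.sum_eq_zero fun i _ =>
        euclidean_integral_fderiv_single_eq_zero hN (h i) (hhi i) (hhic i) i
    · exact fun i _ => (hDcont i).integrable_of_hasCompactSupport (hDicompact i)
  have hD0 : ∀ y, y ∉ K → D y = 0 := by
    intro y hy
    rw [hD]
    exact Finset.sum_eq_zero fun i _ => by rw [hdhi0 i y hy]; rfl
  have hDΩ : ∫ y in Ω, D y = 0 := by
    rw [setIntegral_eq_integral_of_forall_compl_eq_zero
      (fun y hy => hD0 y (fun hmem => hy (hφΩ hmem)))]
    exact hDint0
  -- gradient facts
  have hgradval : ∀ x y, ⟪gradient φ x, y⟫ = fderiv ℝ φ x y := by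
    intro x y
    rw [gradient]
    exact InnerProductSpace.toDual_symm_apply
  have hgradcont : Continuous (gradient φ) := by
    have : gradient φ = fun x => (InnerProductSpace.toDual ℝ _).symm (fderiv ℝ φ x) := rfl
    rw [this]
    exact (InnerProductSpace.toDual ℝ _).symm.continuous.comp (hφ.continuous_fderiv one_ne_zero)
  have hgradsupp : HasCompactSupport (gradient φ) := by
    refine HasCompactSupport.intro hKc fun y hy => ?_
    have : fderiv ℝ φ y = 0 := by
      by_contra hne
      exact hy (support_fderiv_subset ℝ (by simpa using hne))
    show (InnerProductSpace.toDual ℝ _).symm (fderiv ℝ φ y) = 0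
    rw [this]; simp
  have hgrad0 : ∀ y, y ∉ K → gradient φ y = 0 := by
    intro y hy
    have : fderiv ℝ φ y = 0 := by
      by_contra hne
      exact hy (support_fderiv_subset ℝ (by simpa using hne))
    show (InnerProductSpace.toDual ℝ _).symm (fderiv ℝ φ y) = 0
    rw [this]; simp
  have hnormint : Integrable (fun x => ‖gradient φ x‖ ^ 2) := by
    refine Continuous.integrable_of_hasCompactSupport ((hgradcont.norm).pow 2) ?_
    exact HasCompactSupport.intro hKc fun y hy => by rw [hgrad0 y hy]; simp
  have hDintble : Integrable D := by
    rw [hD]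
    exact integrable_finset_sum _ fun i _ =>
      (hDcont i).integrable_of_hasCompactSupport (hDicompact i)
  have hRint : IntegrableOn (fun x => ‖gradient φ x‖ ^ 2 - D x) Ω :=
    (hnormint.sub hDintble).integrableOn
  -- norm of gradient as sum of squares
  have hnormsq : ∀ x, ‖gradient φ x‖ ^ 2
      = ∑ i : Fin N, (fderiv ℝ φ x (EuclideanSpace.single i 1)) ^ 2 := by
    intro x
    rw [← real_inner_self_eq_norm_sq]
    rw [PiLp.inner_apply]
    refine Finset.sum_congr rfl fun i _ => ?_
    have h1 : (gradient φ x) i = fderiv ℝ φ x (EuclideanSpace.single i 1) := by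
      rw [← hgradval x (EuclideanSpace.single i 1), real_inner_comm]
      rw [EuclideanSpace.inner_single_left]; simp
    rw [RCLike.inner_apply, h1]
    simp [pow_two]
  -- pointwise inequality on Ω
  have hpoint : ∀ x ∈ Ω, q x * φ x ^ 2 ≤ ‖gradient φ x‖ ^ 2 - D x := by
    intro x hx
    set s := Φ x with hs
    set t := φ x with ht
    have hs0 : 0 < s := hΦpos x hx
    have hφdiff : DifferentiableAt ℝ φ x := hφ.differentiable one_ne_zero x
    have hΦdiff : DifferentiableAt ℝ Φ x := ((hΦat x hx).of_le (by norm_num : (1 : WithTop ℕ∞) ≤ 2)).differentiableAt one_ne_zero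
    set A : Fin N → ℝ := fun i => fderiv ℝ φ x (EuclideanSpace.single i 1) with hA
    set B : Fin N → ℝ := fun i => fderiv ℝ Φ x (EuclideanSpace.single i 1) with hB
    -- derivative of Φ⁻¹
    have hinvdiff : DifferentiableAt ℝ (fun y => (Φ y)⁻¹) x := by
      exact (differentiableAt_inv hs0.ne').comp x hΦdiff
    have hinvval : ∀ v, fderiv ℝ (fun y => (Φ y)⁻¹) x v = -(s ^ 2)⁻¹ * fderiv ℝ Φ x v := by
      intro v
      have hcomp : fderiv ℝ (fun y => (Φ y)⁻¹) x
          = (fderiv ℝ (fun z : ℝ => z⁻¹) (Φ x)).comp (fderiv ℝ Φ x) :=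
        fderiv_comp x (differentiableAt_inv hs0.ne') hΦdiff
      rw [hcomp]
      simp [fderiv_inv, mul_comm]; exact Or.inl rfl
    have hφ2diff : DifferentiableAt ℝ (fun y => φ y * φ y) x := hφdiff.mul hφdiff
    have hφ2val : ∀ v, fderiv ℝ (fun y => φ y * φ y) x v = 2 * t * fderiv ℝ φ x v := by
      intro v
      rw [fderiv_fun_mul hφdiff hφdiff]
      simp only [ContinuousLinearMap.add_apply, ContinuousLinearMap.coe_smul',
        Pi.smul_apply, smul_eq_mul, ← ht]
      ring
    have hwdiff : DifferentiableAt ℝ w x := hφ2diff.mul hinvdiff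
    have hwval : ∀ v, fderiv ℝ w x v
        = t * t * (-(s ^ 2)⁻¹ * fderiv ℝ Φ x v) + s⁻¹ * (2 * t * fderiv ℝ φ x v) := by
      intro v
      rw [hw]
      rw [fderiv_fun_mul hφ2diff hinvdiff]
      simp only [ContinuousLinearMap.add_apply, ContinuousLinearMap.coe_smul',
        Pi.smul_apply, smul_eq_mul]
      rw [hinvval v, hφ2val v, ← ht, ← hs]
    -- fderiv of h i at x
    have hhival : ∀ i : Fin N, fderiv ℝ (h i) x (EuclideanSpace.single i 1)
        = w x * fderiv ℝ (fun y => fderiv ℝ Φ y (EuclideanSpace.single i 1)) x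
            (EuclideanSpace.single i 1)
          + B i * fderiv ℝ w x (EuclideanSpace.single i 1) := by
      intro i
      have hgidiff : DifferentiableAt ℝ
          (fun y => fderiv ℝ Φ y (EuclideanSpace.single i 1)) x :=
        (hgi i x hx).differentiableAt one_ne_zero
      rw [hh]
      rw [fderiv_fun_mul hwdiff hgidiff]
      simp only [ContinuousLinearMap.add_apply, ContinuousLinearMap.coe_smul',
        Pi.smul_apply, smul_eq_mul]; rfl
    have hDval : D x = w x * lap Φ x
        + ∑ i : Fin N, B i * fderiv ℝ w x (EuclideanSpace.single i 1) := by
      rw [hD, lap]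
      simp only [hhival]
      rw [Finset.sum_add_distrib, Finset.mul_sum]
    have hwx : w x = t * t * s⁻¹ := rfl
    -- per-index inequality
    have hperindex : ∀ i : Fin N,
        A i ^ 2 - B i * fderiv ℝ w x (EuclideanSpace.single i 1)
          = (A i - (t / s) * B i) ^ 2 := by
      intro i
      rw [hwval]
      simp only [hA, hB]
      field_simp
      ring
    have hsum : ‖gradient φ x‖ ^ 2 - D x
        = (∑ i : Fin N, (A i - (t / s) * B i) ^ 2) - w x * lap Φ x := by
      calc ‖gradient φ x‖ ^ 2 - D x
          = (∑ i : Fin N, (A i ^ 2 - B i * fderiv ℝ w x (EuclideanSpace.single i 1)))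
            - w x * lap Φ x := by
            rw [hnormsq x, hDval, Finset.sum_sub_distrib]
            simp only [hA, hB]
            ring
        _ = (∑ i : Fin N, (A i - (t / s) * B i) ^ 2) - w x * lap Φ x := by
            rw [Finset.sum_congr rfl fun i _ => hperindex i]
    rw [hsum]
    have h1 : w x * (q x * s) ≤ w x * (-lap Φ x) := by
      apply mul_le_mul_of_nonneg_left (hqΦ x hx)
      rw [hwx]
      exact mul_nonneg (mul_self_nonneg t) (inv_nonneg.2 hs0.le)
    have h2 : w x * (q x * s) = q x * t ^ 2 := by
      rw [hwx]; field_simp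
    have h3 : (0:ℝ) ≤ ∑ i : Fin N, (A i - (t / s) * B i) ^ 2 :=
      Finset.sum_nonneg fun i _ => sq_nonneg _
    nlinarith [h1, h2, h3]
  -- conclude
  by_cases hLint : IntegrableOn (fun x => q x * φ x ^ 2) Ω
  · calc ∫ x in Ω, q x * φ x ^ 2 ≤ ∫ x in Ω, (‖gradient φ x‖ ^ 2 - D x) :=
          setIntegral_mono_on hLint hRint hΩo.measurableSet hpoint
      _ = (∫ x in Ω, ‖gradient φ x‖ ^ 2) - ∫ x in Ω, D x := by
          exact integral_sub hnormint.integrableOn hDintble.integrableOn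
      _ = ∫ x in Ω, ‖gradient φ x‖ ^ 2 := by rw [hDΩ, sub_zero]
  · rw [integral_undef hLint]
    exact setIntegral_nonneg hΩo.measurableSet fun x _ => sq_nonneg _

end AuxProofs

/-- For a solution of `-Δu = g(v)`, `-Δv = f(u)` with linearized
eigenpair `(λ₁, (φ₁, ψ₁))`, `λ₁ ≥ 0`, `φ₁, ψ₁ > 0`, every `φ ∈ C¹_c(Ω)` satisfies
`∫ g'(v) (ψ₁/φ₁) φ² ≤ ∫ |∇φ|²` and `∫ f'(u) (φ₁/ψ₁) φ² ≤ ∫ |∇φ|²`. -/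
theorem ratio_stability_inequalities {N : ℕ} (hN : 1 ≤ N)
    (Ω : Set (EuclideanSpace ℝ (Fin N))) (hΩ : IsBoundedDomain Ω)
    (f g : ℝ → ℝ) (hf : ContDiff ℝ 1 f) (hg : ContDiff ℝ 1 g)
    (hfmono : Monotone f) (hgmono : Monotone g)
    (u v : EuclideanSpace ℝ (Fin N) → ℝ)
    (huv : IsSystemSolution Ω f g u v)
    (lam1 : ℝ) (hlam1 : 0 ≤ lam1)
    (φ₁ ψ₁ : EuclideanSpace ℝ (Fin N) → ℝ)
    (hφ₁ : ContDiffOn ℝ 2 φ₁ (closure Ω)) (hψ₁ : ContDiffOn ℝ 2 ψ₁ (closure Ω))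
    (hφ₁pos : ∀ x ∈ Ω, 0 < φ₁ x) (hψ₁pos : ∀ x ∈ Ω, 0 < ψ₁ x)
    (heig1 : ∀ x ∈ Ω, -lap φ₁ x - deriv g (v x) * ψ₁ x = lam1 * φ₁ x)
    (heig2 : ∀ x ∈ Ω, -lap ψ₁ x - deriv f (u x) * φ₁ x = lam1 * ψ₁ x)
    (hφ₁bd : ∀ x ∈ frontier Ω, φ₁ x = 0) (hψ₁bd : ∀ x ∈ frontier Ω, ψ₁ x = 0)
    (φ : EuclideanSpace ℝ (Fin N) → ℝ)
    (hφ : ContDiff ℝ 1 φ) (hφc : HasCompactSupport φ) (hφΩ : tsupport φ ⊆ Ω) :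
    (∫ x in Ω, deriv g (v x) * (ψ₁ x / φ₁ x) * φ x ^ 2 ≤
        ∫ x in Ω, ‖gradient φ x‖ ^ 2) ∧
    (∫ x in Ω, deriv f (u x) * (φ₁ x / ψ₁ x) * φ x ^ 2 ≤
        ∫ x in Ω, ‖gradient φ x‖ ^ 2) := by
  obtain ⟨hΩo, hΩconn, hΩbdd⟩ := hΩ
  constructor
  · refine key_ineq hN Ω hΩo φ₁ hφ₁ hφ₁pos
      (fun x => deriv g (v x) * (ψ₁ x / φ₁ x)) ?_ φ hφ hφc hφΩ
    intro x hx
    have h1 : deriv g (v x) * (ψ₁ x / φ₁ x) * φ₁ x = deriv g (v x) * ψ₁ x := by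
      rw [mul_assoc, div_mul_cancel₀ _ (hφ₁pos x hx).ne']
    rw [h1]
    have h2 := heig1 x hx
    have h3 : 0 ≤ lam1 * φ₁ x := mul_nonneg hlam1 (hφ₁pos x hx).le
    linarith
  · refine key_ineq hN Ω hΩo ψ₁ hψ₁ hψ₁pos
      (fun x => deriv f (u x) * (φ₁ x / ψ₁ x)) ?_ φ hφ hφc hφΩ
    intro x hx
    have h1 : deriv f (u x) * (φ₁ x / ψ₁ x) * ψ₁ x = deriv f (u x) * φ₁ x := by
      rw [mul_assoc, div_mul_cancel₀ _ (hψ₁pos x hx).ne']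
    rw [h1]
    have h2 := heig2 x hx
    have h3 : 0 ≤ lam1 * ψ₁ x := mul_nonneg hlam1 (hψ₁pos x hx).le
    linarith
end
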